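/- Let P(s) be a projection-valued analytic function on a connected, simply connected region X ⊆ ℂ with values in bounded operators on a Hilbert space, and set Q(s) = P'(s)P(s) − P(s)P'(s). Then P'(s) = [Q(s), P(s)], and the solutions U(s), V(s) of the linear ODEs U' = QU, U(s₀) = 1 and V' = −VQ, V(s₀) = 1 satisfy V U = U V = 1 and U(s) P(s₀) U(s)⁻¹ = P(s) for all s ∈ X. -/

import Mathlib

open scoped Topology

/-- An idempotent within distance `1` of the identity equals the identity. -/
private lemma idem_eq_one' {R : Type*} [NormedRing R] [CompleteSpace R] {a : R}
    (ha : a * a = a) (h : ‖a - 1‖ < 1) : a = 1 := by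
  have h' : ‖(1 : R) - a‖ < 1 := by rwa [norm_sub_rev]
  have hu : IsUnit a := sub_sub_self 1 a ▸ (Units.oneSub (1 - a) h').isUnit
  have : a * a = a * 1 := by rw [mul_one]; exact ha
  exact hu.mul_left_cancel this

/-- A locally constant-like (open-closed) propagation principle on a preconnected open set. -/
private lemma preconn_propagate {X : Set ℂ} (hXopen : IsOpen X) (hXconn : IsPreconnected X)
    {p : ℂ → Prop}
    (hu : ∀ y ∈ X, p y → ∀ᶠ z in 𝓝 y, z ∈ X → p z)
    (hv : ∀ y ∈ X, ¬ p y → ∀ᶠ z in 𝓝 y, z ∈ X → ¬ p z)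
    {s₀ : ℂ} (hs₀ : s₀ ∈ X) (hp₀ : p s₀) : ∀ s ∈ X, p s := by
  intro s hs
  by_contra hps
  have hUopen : IsOpen {y | y ∈ X ∧ p y} := by
    rw [isOpen_iff_mem_nhds]
    rintro y ⟨hyX, hyp⟩
    filter_upwards [hXopen.mem_nhds hyX, hu y hyX hyp] with z hzX hz
    exact ⟨hzX, hz hzX⟩
  have hVopen : IsOpen {y | y ∈ X ∧ ¬ p y} := by
    rw [isOpen_iff_mem_nhds]
    rintro y ⟨hyX, hyp⟩
    filter_upwards [hXopen.mem_nhds hyX, hv y hyX hyp] with z hzX hz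
    exact ⟨hzX, hz hzX⟩
  obtain ⟨z, _, ⟨-, hz1⟩, -, hz2⟩ :=
    hXconn _ _ hUopen hVopen
      (fun y hy => by by_cases hpy : p y
                      · exact Or.inl ⟨hy, hpy⟩
                      · exact Or.inr ⟨hy, hpy⟩)
      ⟨s₀, hs₀, hs₀, hp₀⟩ ⟨s, hs, hs, hps⟩
  exact hz2 hz1

/-- A function with vanishing derivative on an open preconnected set is constant there. -/
private lemma const_of_hasDerivAt_zero {E : Type*} [NormedAddCommGroup E] [NormedSpace ℂ E]
    {X : Set ℂ} (hXopen : IsOpen X) (hXconn : IsPreconnected X)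
    {f : ℂ → E} (hf : ∀ s ∈ X, HasDerivAt f (0 : E) s)
    {s₀ : ℂ} (hs₀ : s₀ ∈ X) : ∀ s ∈ X, f s = f s₀ := by
  have hloc : ∀ y ∈ X, ∀ᶠ z in 𝓝 y, f z = f y := by
    intro y hy
    obtain ⟨r, hr, hball⟩ := Metric.isOpen_iff.mp hXopen y hy
    have hconv : Convex ℝ (Metric.ball y r) := convex_ball y r
    have hdiff : DifferentiableOn ℂ f (Metric.ball y r) := fun z hz =>
      ((hf z (hball hz)).differentiableAt).differentiableWithinAt
    have hfd : ∀ z ∈ Metric.ball y r, fderivWithin ℂ f (Metric.ball y r) z = 0 := by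
      intro z hz
      rw [fderivWithin_of_mem_nhds (Metric.isOpen_ball.mem_nhds hz)]
      have h0 : HasFDerivAt f (0 : ℂ →L[ℂ] E) z := by
        have h := (hf z (hball hz)).hasFDerivAt
        have he : ContinuousLinearMap.toSpanSingleton ℂ (0 : E) = 0 := by ext; simp
        rwa [he] at h
      exact h0.fderiv
    filter_upwards [Metric.ball_mem_nhds y hr] with z hz
    exact hconv.is_const_of_fderivWithin_eq_zero hdiff hfd hz (Metric.mem_ball_self hr)
  refine preconn_propagate hXopen hXconn (p := fun y => f y = f s₀) ?_ ?_ hs₀ rfl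
  · intro y _ hy
    filter_upwards [hloc y ‹y ∈ X›] with z hz _
    rw [hz, hy]
  · intro y _ hy
    filter_upwards [hloc y ‹y ∈ X›] with z hz _
    rw [hz]; exact hy

/-- Let `P` be a projection-valued analytic (holomorphic) function on a connected, simply
connected region `X ⊆ ℂ`, and set `Q(s) = P'(s)P(s) - P(s)P'(s)`.  Then
`P'(s) = [Q(s), P(s)]`, and the solutions `U`, `V` of the linear initial value problems
`U' = Q U`, `U(s₀) = 1` and `V' = -V Q`, `V(s₀) = 1` satisfy `V U = U V = 1` and
`U(s) P(s₀) U(s)⁻¹ = P(s)` for all `s ∈ X`. -/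
theorem projection_conjugation_ode {H : Type*} [NormedAddCommGroup H]
    [InnerProductSpace ℂ H] [CompleteSpace H]
    (X : Set ℂ) (hXopen : IsOpen X) (hXconn : IsPreconnected X)
    (hXsc : SimplyConnectedSpace ↥X)
    (s₀ : ℂ) (hs₀ : s₀ ∈ X)
    (P : ℂ → H →L[ℂ] H)
    (hPanalytic : ∀ s ∈ X, DifferentiableAt ℂ P s)
    (hPproj : ∀ s ∈ X, P s * P s = P s)
    (U V : ℂ → H →L[ℂ] H)
    (hUanalytic : ∀ s ∈ X, DifferentiableAt ℂ U s)
    (hVanalytic : ∀ s ∈ X, DifferentiableAt ℂ V s)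
    (hU : ∀ s ∈ X, HasDerivAt U ((deriv P s * P s - P s * deriv P s) * U s) s)
    (hU₀ : U s₀ = 1)
    (hV : ∀ s ∈ X, HasDerivAt V (-(V s * (deriv P s * P s - P s * deriv P s))) s)
    (hV₀ : V s₀ = 1) :
    ∀ s ∈ X,
      deriv P s = (deriv P s * P s - P s * deriv P s) * P s -
          P s * (deriv P s * P s - P s * deriv P s) ∧
      V s * U s = 1 ∧ U s * V s = 1 ∧ U s * P s₀ * V s = P s := by
  -- Step 0: basic consequences of P² = P.
  have hA : ∀ s ∈ X, deriv P s * P s + P s * deriv P s = deriv P s := by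
    intro s hs
    have hd := (hPanalytic s hs).hasDerivAt
    have hsq : HasDerivAt (fun t => P t * P t) (deriv P s * P s + P s * deriv P s) s := hd.mul hd
    have heq : P =ᶠ[𝓝 s] (fun t => P t * P t) := by
      filter_upwards [hXopen.mem_nhds hs] with t ht using (hPproj t ht).symm
    exact (hsq.congr_of_eventuallyEq heq).unique hd
  have hPAP : ∀ s ∈ X, P s * deriv P s * P s = 0 := by
    intro s hs
    have hp := hPproj s hs
    have h1 : P s * deriv P s * P s = P s * (deriv P s * P s + P s * deriv P s) * P s := by
      rw [hA s hs]
    have h2 : P s * (deriv P s * P s + P s * deriv P s) * P s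
        = P s * deriv P s * (P s * P s) + (P s * P s) * deriv P s * P s := by noncomm_ring
    rw [hp] at h2
    have h3 := h1.trans h2
    exact left_eq_add.mp h3
  -- Part 1: P' = [Q, P].
  have hpart1 : ∀ s ∈ X, deriv P s = (deriv P s * P s - P s * deriv P s) * P s -
      P s * (deriv P s * P s - P s * deriv P s) := by
    intro s hs
    have hp := hPproj s hs
    have key : (deriv P s * P s - P s * deriv P s) * P s -
        P s * (deriv P s * P s - P s * deriv P s)
        = (deriv P s * (P s * P s) + (P s * P s) * deriv P s) -
          (P s * deriv P s * P s + P s * deriv P s * P s) := by noncomm_ring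
    rw [hp, hPAP s hs, hA s hs] at key
    rw [key]
    simp
  -- Part 2: V U = 1 on X.
  have hVU : ∀ s ∈ X, V s * U s = 1 := by
    have hzero : ∀ s ∈ X, HasDerivAt (fun t => V t * U t) (0 : H →L[ℂ] H) s := by
      intro s hs
      have h2 := (hV s hs).mul (hU s hs)
      have hval : -(V s * (deriv P s * P s - P s * deriv P s)) * U s +
          V s * ((deriv P s * P s - P s * deriv P s) * U s) = 0 := by noncomm_ring
      rwa [hval] at h2
    intro s hs
    have := const_of_hasDerivAt_zero hXopen hXconn hzero hs₀ s hs
    rw [this, hU₀, hV₀, one_mul]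
  -- Part 3: U V = 1 on X.
  have hUV : ∀ s ∈ X, U s * V s = 1 := by
    have hidem : ∀ s ∈ X, (U s * V s) * (U s * V s) = U s * V s := by
      intro s hs
      have h1 : (U s * V s) * (U s * V s) = U s * (V s * U s) * V s := by noncomm_ring
      rw [h1, hVU s hs, mul_one]
    have hcont : ∀ y ∈ X, ContinuousAt (fun t => U t * V t) y := fun y hy =>
      ((hUanalytic y hy).continuousAt).mul ((hVanalytic y hy).continuousAt)
    refine preconn_propagate hXopen hXconn (p := fun y => U y * V y = 1) ?_ ?_ hs₀ ?_
    · intro y hy hpy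
      have hnc : ContinuousAt (fun t => ‖U t * V t - 1‖) y :=
        ((hcont y hy).sub continuousAt_const).norm
      have h0 : ‖U y * V y - 1‖ < 1 := by rw [hpy]; simp
      have hev : ∀ᶠ z in 𝓝 y, ‖U z * V z - 1‖ < 1 := hnc.tendsto.eventually_lt_const h0
      filter_upwards [hev] with z hz hzX
      exact idem_eq_one' (hidem z hzX) hz
    · intro y hy hpy
      filter_upwards [(hcont y hy).eventually_ne hpy] with z hz _
      exact hz
    · show U s₀ * V s₀ = 1
      rw [hU₀, hV₀, one_mul]
  -- Part 4: U P(s₀) V = P on X.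
  have hconj : ∀ s ∈ X, U s * P s₀ * V s = P s := by
    have hzero : ∀ s ∈ X, HasDerivAt (fun t => V t * P t * U t) (0 : H →L[ℂ] H) s := by
      intro s hs
      have hp := hPproj s hs
      have h1 := (hV s hs).mul (hPanalytic s hs).hasDerivAt
      have h2 := h1.mul (hU s hs)
      have hE : (-(V s * (deriv P s * P s - P s * deriv P s)) * P s + V s * deriv P s) * U s +
          V s * P s * ((deriv P s * P s - P s * deriv P s) * U s)
          = V s * (deriv P s - (deriv P s * (P s * P s) + (P s * P s) * deriv P s) +
              (P s * deriv P s * P s + P s * deriv P s * P s)) * U s := by noncomm_ring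
      rw [hp, hPAP s hs, hA s hs] at hE
      have hE' : (-(V s * (deriv P s * P s - P s * deriv P s)) * P s + V s * deriv P s) * U s +
          V s * P s * ((deriv P s * P s - P s * deriv P s) * U s) = 0 := by
        rw [hE]; simp
      rwa [Pi.mul_apply, hE'] at h2
    intro s hs
    have hc : V s * P s * U s = P s₀ := by
      have := const_of_hasDerivAt_zero hXopen hXconn hzero hs₀ s hs
      rw [this, hU₀, hV₀, one_mul, mul_one]
    calc U s * P s₀ * V s = U s * (V s * P s * U s) * V s := by rw [hc]
      _ = (U s * V s) * P s * (U s * V s) := by noncomm_ring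
      _ = P s := by rw [hUV s hs, one_mul, mul_one]
  exact fun s hs => ⟨hpart1 s hs, hVU s hs, hUV s hs, hconj s hs⟩
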